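/- With μ, ν σ-finite and joint density p as above, define k(y, B) = ∫_B p(x,y)/p_Y(y) dμ(x) for y with 0 < p_Y(y) < ∞, and k(y, B) = ∫_B p_X(x) dμ(x) otherwise, where p_X(x) = ∫ p(x,y) dν(y) and p_Y(y) = ∫ p(x,y) dμ(x). Then for all A ∈ ℰ_X and C ∈ ℰ_Y: ∫_C k(y, A) · p_Y(y) dν(y) = ∫_{A×C} p d(μ⊗ν). -/

import Mathlib

open MeasureTheory ENNReal

theorem conditional_density_disintegration
    {EX EY : Type*} [MeasurableSpace EX] [MeasurableSpace EY]
    (μ : Measure EX) (ν : Measure EY) [SigmaFinite μ] [SigmaFinite ν]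
    (p : EX × EY → ℝ≥0∞) (hp_meas : Measurable p) (hp_fin : ∀ z, p z < ∞)
    (hp_prob : ∫⁻ z, p z ∂(μ.prod ν) = 1)
    (pX : EX → ℝ≥0∞) (hpX : ∀ x, pX x = ∫⁻ y, p (x, y) ∂ν)
    (pY : EY → ℝ≥0∞) (hpY : ∀ y, pY y = ∫⁻ x, p (x, y) ∂μ)
    (k : EY → Set EX → ℝ≥0∞)
    (hk : ∀ y B, k y B =
      if 0 < pY y ∧ pY y < ∞ then ∫⁻ x in B, p (x, y) / pY y ∂μ
      else ∫⁻ x in B, pX x ∂μ) :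
    ∀ A : Set EX, MeasurableSet A → ∀ C : Set EY, MeasurableSet C →
      ∫⁻ y in C, k y A * pY y ∂ν = ∫⁻ z in A ×ˢ C, p z ∂(μ.prod ν) := by
  intro A hA C hC
  have hpY_meas : Measurable pY := by
    have h := (hp_meas.lintegral_prod_left' : Measurable fun y => ∫⁻ x, p (x, y) ∂μ)
    have : pY = fun y => ∫⁻ x, p (x, y) ∂μ := funext hpY
    rw [this]; exact h
  have hint : ∫⁻ y, pY y ∂ν = 1 := by
    have := lintegral_prod_symm p hp_meas.aemeasurable (μ := μ) (ν := ν)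
    simp_rw [hpY]
    rw [← this, hp_prob]
  have hfin : ∀ᵐ y ∂ν, pY y < ∞ := ae_lt_top hpY_meas (by rw [hint]; exact one_ne_top)
  have hfin' : ∀ᵐ y ∂(ν.restrict C), pY y < ∞ := ae_restrict_of_ae hfin
  have key : ∀ᵐ y ∂(ν.restrict C), k y A * pY y = ∫⁻ x in A, p (x, y) ∂μ := by
    filter_upwards [hfin'] with y hy
    rw [hk]
    by_cases h0 : pY y = 0
    · have hle : ∫⁻ x in A, p (x, y) ∂μ ≤ pY y := by
        rw [hpY]; exact setLIntegral_le_lintegral _ _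
      rw [h0] at hle
      simp [h0, le_antisymm hle zero_le]
    · rw [if_pos ⟨pos_iff_ne_zero.mpr h0, hy⟩]
      have hm : Measurable fun x => p (x, y) := hp_meas.comp measurable_prodMk_right
      simp_rw [div_eq_mul_inv]
      rw [lintegral_mul_const _ hm, mul_assoc, ENNReal.inv_mul_cancel h0 hy.ne, mul_one]
  calc ∫⁻ y in C, k y A * pY y ∂ν = ∫⁻ y in C, ∫⁻ x in A, p (x, y) ∂μ ∂ν :=
        lintegral_congr_ae key
    _ = ∫⁻ z in A ×ˢ C, p z ∂(μ.prod ν) := by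
        rw [← Measure.prod_restrict, lintegral_prod_symm _ hp_meas.aemeasurable]
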